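/- Let n be a positive natural number, α ∈ (0,1), and let C be a real symmetric positive definite n×n matrix with spectral decomposition C = U · diag(δ_1,…,δ_n) · Uᵀ, where U is orthogonal and all δ_k > 0. Define the objective J(Σ) = log(det Σ) + tr(Σ⁻¹ C) + α·(tr Σ − log(det Σ) − n) on real symmetric positive definite n×n matrices Σ. Set λ_k = √(((1−α)/(2α))² + δ_k/α) − (1−α)/(2α) for each k, and Σ* = U · diag(λ_1,…,λ_n) · Uᵀ. Then Σ* is symmetric positive definite and J(Σ*) ≤ J(Σ) for every real symmetric positive definite n×n matrix Σ. -/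

import Mathlib

open Matrix
open scoped MatrixOrder

variable {n : ℕ}

lemma aux_trace_mul_transpose_nonneg (X : Matrix (Fin n) (Fin n) ℝ) :
    0 ≤ (X * Xᵀ).trace := by
  simp only [Matrix.trace, Matrix.diag, Matrix.mul_apply, Matrix.transpose_apply]
  exact Finset.sum_nonneg fun i _ => Finset.sum_nonneg fun j _ => mul_self_nonneg _

lemma aux_conj_posDef (B D : Matrix (Fin n) (Fin n) ℝ) (hD : D.PosDef)
    (hB : IsUnit B.det) : (B * D * Bᵀ).PosDef := by
  have hDt : Dᵀ = D := by
    have := hD.isHermitian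
    rwa [Matrix.IsHermitian, Matrix.conjTranspose_eq_transpose_of_trivial] at this
  refine Matrix.PosDef.of_dotProduct_mulVec_pos ?_ ?_
  · rw [Matrix.IsHermitian, Matrix.conjTranspose_eq_transpose_of_trivial,
      Matrix.transpose_mul, Matrix.transpose_mul, Matrix.transpose_transpose, hDt, Matrix.mul_assoc]
  · intro x hx
    have hBt : IsUnit Bᵀ.det := by rwa [Matrix.det_transpose]
    have hy : Bᵀ *ᵥ x ≠ 0 := by
      intro h
      apply hx
      have := congrArg (fun v => (Bᵀ)⁻¹ *ᵥ v) h
      simpa [Matrix.mulVec_mulVec, Matrix.nonsing_inv_mul _ hBt] using this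
    have key := hD.dotProduct_mulVec_pos hy
    have : star x ⬝ᵥ ((B * D * Bᵀ) *ᵥ x) = star (Bᵀ *ᵥ x) ⬝ᵥ (D *ᵥ (Bᵀ *ᵥ x)) := by
      simp only [star_trivial, ← Matrix.mulVec_mulVec, Matrix.dotProduct_mulVec,
        ← Matrix.mulVec_transpose]
    rw [this]
    exact key

lemma aux_logdet_le {M : Matrix (Fin n) (Fin n) ℝ} (hM : M.PosDef) :
    Real.log M.det ≤ M.trace - n := by
  have hH := hM.isHermitian
  have hev : ∀ i, 0 < hH.eigenvalues i := hM.eigenvalues_pos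
  have hdet : M.det = ∏ i, hH.eigenvalues i := by simpa using hH.det_eq_prod_eigenvalues
  have htr : M.trace = ∑ i, hH.eigenvalues i := by
    conv_lhs => rw [hH.spectral_theorem]
    rw [Unitary.conjStarAlgAut_apply, Matrix.trace_mul_comm, ← Matrix.mul_assoc, Unitary.coe_star_mul_self, one_mul]
    simp [Matrix.trace_diagonal]
  rw [hdet, htr, Real.log_prod (fun i _ => (hev i).ne')]
  calc ∑ i, Real.log (hH.eigenvalues i) ≤ ∑ i, (hH.eigenvalues i - 1) :=
        Finset.sum_le_sum fun i _ => Real.log_le_sub_one_of_pos (hev i)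
    _ = (∑ i, hH.eigenvalues i) - n := by
        rw [Finset.sum_sub_distrib]; simp

/-- Closed-form minimizer of the regularized maximum likelihood covariance estimation
problem `J(Σ) = log det Σ + tr(Σ⁻¹ C) + α·(tr Σ − log det Σ − n)` over symmetric
positive definite matrices: if `C = U diag(δ) Uᵀ` with `U` orthogonal and `δ_k > 0`,
then `Σ* = U diag(λ) Uᵀ` with `λ_k = √(((1−α)/(2α))² + δ_k/α) − (1−α)/(2α)` is
symmetric positive definite and minimizes `J`. -/
theorem robust_covariance_closed_form
    (n : ℕ) (hn : 0 < n) (α : ℝ) (hα : α ∈ Set.Ioo (0 : ℝ) 1)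
    (C U : Matrix (Fin n) (Fin n) ℝ) (δ : Fin n → ℝ)
    (hC : C.PosDef) (hU : Uᵀ * U = 1) (hδ : ∀ k, 0 < δ k)
    (hdec : C = U * Matrix.diagonal δ * Uᵀ) :
    let J : Matrix (Fin n) (Fin n) ℝ → ℝ := fun S =>
      Real.log S.det + (S⁻¹ * C).trace + α * (S.trace - Real.log S.det - (n : ℝ))
    let lam : Fin n → ℝ := fun k =>
      Real.sqrt (((1 - α) / (2 * α)) ^ 2 + δ k / α) - (1 - α) / (2 * α)
    let Sstar : Matrix (Fin n) (Fin n) ℝ := U * Matrix.diagonal lam * Uᵀ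
    Sstar.PosDef ∧ ∀ S : Matrix (Fin n) (Fin n) ℝ, S.PosDef → J Sstar ≤ J S := by
  intro J lam Sstar
  obtain ⟨hα0, hα1⟩ := hα
  set a : ℝ := (1 - α) / (2 * α) with ha_def
  have ha : 0 < a := div_pos (by linarith) (by linarith)
  -- positivity of lam
  have hlam : ∀ k, 0 < lam k := by
    intro k
    have h1 : a < Real.sqrt (a ^ 2 + δ k / α) := by
      have : a = Real.sqrt (a ^ 2) := by rw [Real.sqrt_sq ha.le]
      rw [this]
      apply Real.sqrt_lt_sqrt (by positivity)
      nlinarith [hδ k, div_pos (hδ k) hα0, Real.sq_sqrt ha.le]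
    simpa [lam] using sub_pos.mpr h1
  -- quadratic identity
  have hquad : ∀ k, (1 - α) * lam k + α * (lam k * lam k) = δ k := by
    intro k
    have hpos : (0:ℝ) ≤ a ^ 2 + δ k / α := by
      have := div_pos (hδ k) hα0
      nlinarith [sq_nonneg a]
    have hs : Real.sqrt (a ^ 2 + δ k / α) ^ 2 = a ^ 2 + δ k / α := Real.sq_sqrt hpos
    have h2a : 1 - α = 2 * α * a := by rw [ha_def]; field_simp
    have hlk : lam k = Real.sqrt (a ^ 2 + δ k / α) - a := rfl
    rw [hlk, h2a]
    have hδα : α * (δ k / α) = δ k := by field_simp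
    nlinarith [hs]
  -- U facts
  have hUU : U * Uᵀ = 1 := mul_eq_one_comm.mp hU
  have hUdet : IsUnit U.det := by
    apply IsUnit.of_mul_eq_one Uᵀ.det
    rw [← Matrix.det_mul, hUU, Matrix.det_one]
  -- Sstar * Sstar
  have hassoc : ∀ X : Matrix (Fin n) (Fin n) ℝ, Uᵀ * (U * X) = X := fun X => by
    rw [← Matrix.mul_assoc, hU, Matrix.one_mul]
  have hSS : Sstar * Sstar = U * Matrix.diagonal (fun k => lam k * lam k) * Uᵀ := by
    show U * Matrix.diagonal lam * Uᵀ * (U * Matrix.diagonal lam * Uᵀ) = _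
    simp only [Matrix.mul_assoc]
    rw [hassoc, ← Matrix.mul_assoc (Matrix.diagonal lam), Matrix.diagonal_mul_diagonal]
  -- C in terms of Sstar
  have hdiagsum : Matrix.diagonal δ =
      (1 - α) • Matrix.diagonal lam + α • Matrix.diagonal (fun k => lam k * lam k) := by
    ext i j
    by_cases h : i = j
    · subst h
      simp only [Matrix.diagonal_apply_eq, Matrix.add_apply, Matrix.smul_apply, smul_eq_mul]
      linarith [hquad i]
    · simp [Matrix.diagonal_apply_ne _ h, h]
  have hC' : C = (1 - α) • Sstar + α • (Sstar * Sstar) := by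
    rw [hdec, hdiagsum, Matrix.mul_add, Matrix.add_mul, Matrix.mul_smul, Matrix.smul_mul,
      Matrix.mul_smul, Matrix.smul_mul, hSS]
  -- Sstar PosDef
  have hDlam : (Matrix.diagonal lam).PosDef := Matrix.posDef_diagonal_iff.mpr hlam
  have hSPD : Sstar.PosDef := aux_conj_posDef U (Matrix.diagonal lam) hDlam hUdet
  refine ⟨hSPD, ?_⟩
  intro S hS
  -- basic facts about Sstar and S
  have hSdet : IsUnit S.det := hS.det_pos.ne'.isUnit
  have hSsdet : IsUnit Sstar.det := hSPD.det_pos.ne'.isUnit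
  have hSinv : S⁻¹.PosDef := hS.inv
  have hSsym : Sstarᵀ = Sstar := by
    have := hSPD.isHermitian
    rwa [Matrix.IsHermitian, Matrix.conjTranspose_eq_transpose_of_trivial] at this
  -- value of J Sstar
  have hSsC : Sstar⁻¹ * C = (1 - α) • (1 : Matrix (Fin n) (Fin n) ℝ) + α • Sstar := by
    have hinv : Sstar⁻¹ * Sstar = 1 := Matrix.nonsing_inv_mul _ hSsdet
    rw [hC', Matrix.mul_add, Matrix.mul_smul, Matrix.mul_smul,
      ← Matrix.mul_assoc Sstar⁻¹ Sstar Sstar, hinv, Matrix.one_mul]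
  have htrSsC : (Sstar⁻¹ * C).trace = (1 - α) * n + α * Sstar.trace := by
    rw [hSsC, Matrix.trace_add, Matrix.trace_smul, Matrix.trace_smul, Matrix.trace_one]
    simp [smul_eq_mul]
  -- Key 1 : log det inequality
  have key1 : Real.log Sstar.det + n - (Sstar * S⁻¹).trace ≤ Real.log S.det := by
    set R := CFC.sqrt Sstar with hR_def
    have hR2 : R * R = Sstar := CFC.sqrt_mul_sqrt_self Sstar hSPD.posSemidef.nonneg
    have hRsym : Rᵀ = R := by
      have := (nonneg_iff_posSemidef.mp (CFC.sqrt_nonneg Sstar)).isHermitian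
      rwa [Matrix.IsHermitian, Matrix.conjTranspose_eq_transpose_of_trivial] at this
    have hRdet : IsUnit R.det := by
      have : R.det * R.det = Sstar.det := by rw [← Matrix.det_mul, hR2]
      have h0 : R.det ≠ 0 := by
        intro h; rw [h, mul_zero] at this; exact hSPD.det_pos.ne (this)
      exact h0.isUnit
    have hMPD : (R * S⁻¹ * Rᵀ).PosDef := aux_conj_posDef R S⁻¹ hSinv hRdet
    have hle := aux_logdet_le hMPD
    have hdetM : (R * S⁻¹ * Rᵀ).det = Sstar.det * S.det⁻¹ := by
      rw [Matrix.det_mul, Matrix.det_mul, Matrix.det_transpose, Matrix.det_nonsing_inv,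
        Ring.inverse_eq_inv']
      rw [show R.det * S.det⁻¹ * R.det = R.det * R.det * S.det⁻¹ by ring, ← Matrix.det_mul, hR2]
    have htrM : (R * S⁻¹ * Rᵀ).trace = (Sstar * S⁻¹).trace := by
      rw [hRsym, Matrix.trace_mul_comm, ← Matrix.mul_assoc, hR2]
    have hlogM : Real.log (R * S⁻¹ * Rᵀ).det = Real.log Sstar.det - Real.log S.det := by
      rw [hdetM, Real.log_mul hSPD.det_pos.ne' (inv_ne_zero hS.det_pos.ne'), Real.log_inv]
      ring
    rw [hlogM, htrM] at hle
    linarith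
  -- Key 2 : trace inequality
  have key2 : 2 * Sstar.trace ≤ S.trace + (Sstar * Sstar * S⁻¹).trace := by
    set R := CFC.sqrt S with hR_def
    have hR2 : R * R = S := CFC.sqrt_mul_sqrt_self S hS.posSemidef.nonneg
    have hRsym : Rᵀ = R := by
      have := (nonneg_iff_posSemidef.mp (CFC.sqrt_nonneg S)).isHermitian
      rwa [Matrix.IsHermitian, Matrix.conjTranspose_eq_transpose_of_trivial] at this
    have hRdet : IsUnit R.det := by
      have h : R.det * R.det = S.det := by rw [← Matrix.det_mul, hR2]
      have h0 : R.det ≠ 0 := by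
        intro h'; rw [h', mul_zero] at h; exact hS.det_pos.ne h
      exact h0.isUnit
    have hRinv : R⁻¹ * R⁻¹ = S⁻¹ := by rw [← Matrix.mul_inv_rev, hR2]
    set X := Sstar * R⁻¹ - R with hX_def
    have hXt : Xᵀ = R⁻¹ * Sstar - R := by
      rw [hX_def, Matrix.transpose_sub, Matrix.transpose_mul, Matrix.transpose_nonsing_inv,
        hRsym, hSsym]
    have hXX : X * Xᵀ = Sstar * S⁻¹ * Sstar - Sstar - Sstar + S := by
      rw [hX_def, hXt]
      rw [Matrix.sub_mul, Matrix.mul_sub, Matrix.mul_sub]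
      rw [Matrix.mul_assoc Sstar R⁻¹ (R⁻¹ * Sstar), ← Matrix.mul_assoc R⁻¹ R⁻¹ Sstar, hRinv,
        ← Matrix.mul_assoc Sstar S⁻¹ Sstar]
      rw [Matrix.mul_assoc Sstar R⁻¹ R, Matrix.nonsing_inv_mul _ hRdet, Matrix.mul_one]
      rw [← Matrix.mul_assoc R R⁻¹ Sstar, Matrix.mul_nonsing_inv _ hRdet, Matrix.one_mul, hR2]
      abel
    have h0 := aux_trace_mul_transpose_nonneg X
    rw [hXX] at h0
    have htr3 : (Sstar * S⁻¹ * Sstar).trace = (Sstar * Sstar * S⁻¹).trace := by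
      rw [Matrix.trace_mul_comm, ← Matrix.mul_assoc]
    simp only [Matrix.trace_add, Matrix.trace_sub] at h0
    rw [htr3] at h0
    linarith
  -- Key 3 : trace of S⁻¹ C
  have key3 : (S⁻¹ * C).trace =
      (1 - α) * (Sstar * S⁻¹).trace + α * (Sstar * Sstar * S⁻¹).trace := by
    rw [hC', Matrix.mul_add, Matrix.mul_smul, Matrix.mul_smul, Matrix.trace_add,
      Matrix.trace_smul, Matrix.trace_smul, Matrix.trace_mul_comm S⁻¹ Sstar,
      Matrix.trace_mul_comm S⁻¹ (Sstar * Sstar)]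
    simp [smul_eq_mul]
  -- combine
  show Real.log Sstar.det + (Sstar⁻¹ * C).trace + α * (Sstar.trace - Real.log Sstar.det - n) ≤
      Real.log S.det + (S⁻¹ * C).trace + α * (S.trace - Real.log S.det - n)
  rw [htrSsC, key3]
  have h1 : (1 - α) * (Real.log Sstar.det + n - (Sstar * S⁻¹).trace) ≤ (1 - α) * Real.log S.det :=
    mul_le_mul_of_nonneg_left key1 (by linarith)
  have h2 : α * (2 * Sstar.trace) ≤ α * (S.trace + (Sstar * Sstar * S⁻¹).trace) :=
    mul_le_mul_of_nonneg_left key2 hα0.le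
  nlinarith [h1, h2]
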